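/- For d ≥ 5, the constant c_d = (2π)^{−d} ∫_{[−π,π]^d} Φ(φ)^{−2} dφ is finite and positive, and lim_{λ→0+} (I(0) − I(λ))/λ = c_d; that is, I(λ) = I(0) − c_d λ + o(λ) as λ → 0+. -/

import Mathlib

open MeasureTheory Real Filter
open scoped ENNReal

noncomputable section

/-- The Fourier symbol `Φ(φ) = 2 ∑_j (1 - cos φ_j)` of the negative discrete Laplacian on `ℤ^d`. -/
def Phi (d : ℕ) (φ : Fin d → ℝ) : ℝ := 2 * ∑ j, (1 - Real.cos (φ j))

/-- The cube `[-π, π]^d`. -/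
def cube (d : ℕ) : Set (Fin d → ℝ) := Set.univ.pi fun _ => Set.Icc (-π) π

/-- `I(λ) = (2π)^{-d} ∫_{[-π,π]^d} (λ + Φ(φ))⁻¹ dφ` (Bochner integral, real-valued). -/
def Ir (d : ℕ) (lam : ℝ) : ℝ := ((2 * π) ^ d)⁻¹ * ∫ φ in cube d, (lam + Phi d φ)⁻¹

/-- The constant `c_d = (2π)^{-d} ∫_{[-π,π]^d} Φ(φ)^{-2} dφ`. -/
def cd (d : ℕ) : ℝ := ((2 * π) ^ d)⁻¹ * ∫ φ in cube d, ((Phi d φ) ^ 2)⁻¹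

lemma phi_cont (d : ℕ) : Continuous (Phi d) :=
  continuous_const.mul (continuous_finset_sum _ fun j _ =>
    continuous_const.sub (Real.continuous_cos.comp (continuous_apply j)))

lemma phi_nonneg (d : ℕ) (φ : Fin d → ℝ) : 0 ≤ Phi d φ :=
  mul_nonneg (by norm_num) (Finset.sum_nonneg fun j _ => by
    linarith [Real.cos_le_one (φ j)])

lemma cube_measurable (d : ℕ) : MeasurableSet (cube d) :=
  MeasurableSet.univ_pi fun _ => measurableSet_Icc

lemma volume_cube (d : ℕ) : volume (cube d) = (ENNReal.ofReal (2 * π)) ^ d := by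
  rw [cube, volume_pi_pi]
  simp [Real.volume_Icc, two_mul]

lemma norm_sq_le_sum (d : ℕ) (φ : Fin d → ℝ) : ‖φ‖ ^ 2 ≤ ∑ j, (φ j) ^ 2 := by
  have hs : (0:ℝ) ≤ ∑ j, (φ j) ^ 2 := Finset.sum_nonneg fun j _ => sq_nonneg _
  have h : ‖φ‖ ≤ Real.sqrt (∑ j, (φ j) ^ 2) := by
    rw [pi_norm_le_iff_of_nonneg (Real.sqrt_nonneg _)]
    intro i
    rw [Real.norm_eq_abs]
    exact Real.abs_le_sqrt (Finset.single_le_sum (fun j _ => sq_nonneg (φ j)) (Finset.mem_univ i))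
  calc ‖φ‖ ^ 2 ≤ Real.sqrt (∑ j, (φ j) ^ 2) ^ 2 := by
        exact pow_le_pow_left₀ (norm_nonneg _) h 2
    _ = ∑ j, (φ j) ^ 2 := Real.sq_sqrt hs

lemma phi_lower (d : ℕ) {φ : Fin d → ℝ} (hφ : φ ∈ cube d) :
    4 / π ^ 2 * ‖φ‖ ^ 2 ≤ Phi d φ := by
  have hstep : ∀ j, 2 / π ^ 2 * (φ j) ^ 2 ≤ 1 - Real.cos (φ j) := by
    intro j
    have hj : |φ j| ≤ π := by
      have := hφ j (Set.mem_univ j)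
      exact abs_le.mpr ⟨this.1, this.2⟩
    linarith [Real.cos_le_one_sub_mul_cos_sq hj]
  have h1 : 2 / π ^ 2 * ∑ j, (φ j) ^ 2 ≤ ∑ j, (1 - Real.cos (φ j)) := by
    rw [Finset.mul_sum]
    exact Finset.sum_le_sum fun j _ => hstep j
  have h2 := norm_sq_le_sum d φ
  have hπ : (0:ℝ) < π ^ 2 := by positivity
  rw [Phi]
  calc 4 / π ^ 2 * ‖φ‖ ^ 2 = 2 * (2 / π ^ 2 * ‖φ‖ ^ 2) := by ring
    _ ≤ 2 * (2 / π ^ 2 * ∑ j, (φ j) ^ 2) := by gcongr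
    _ ≤ 2 * ∑ j, (1 - Real.cos (φ j)) := by linarith

lemma lintegral_inv_norm_pow4 (d : ℕ) (hd : 5 ≤ d) :
    ∫⁻ φ in cube d, ENNReal.ofReal ((‖φ‖ ^ 4)⁻¹) < ∞ := by
  have hmeas : Measurable fun φ : Fin d → ℝ => (‖φ‖ ^ 4)⁻¹ :=
    (measurable_norm.pow_const 4).inv
  rw [lintegral_eq_lintegral_meas_le (volume.restrict (cube d))
    (Eventually.of_forall fun φ => by positivity) hmeas.aemeasurable]
  have hsplit : Set.Ioi (0:ℝ) = Set.Ioc 0 1 ∪ Set.Ioi 1 :=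
    (Set.Ioc_union_Ioi_eq_Ioi zero_le_one).symm
  rw [hsplit, lintegral_union measurableSet_Ioi (Set.Ioc_disjoint_Ioi le_rfl)]
  have hcube : volume (cube d) < ∞ := by
    rw [volume_cube]; exact ENNReal.pow_lt_top ENNReal.ofReal_lt_top
  have piece1 : ∫⁻ t in Set.Ioc (0:ℝ) 1,
      volume.restrict (cube d) {a | t ≤ (‖a‖ ^ 4)⁻¹} < ∞ := by
    calc ∫⁻ t in Set.Ioc (0:ℝ) 1, volume.restrict (cube d) {a | t ≤ (‖a‖ ^ 4)⁻¹}
        ≤ ∫⁻ _ in Set.Ioc (0:ℝ) 1, volume (cube d) := by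
          refine setLIntegral_mono' measurableSet_Ioc fun t _ => ?_
          exact le_trans (measure_mono (Set.subset_univ _)) (Measure.restrict_apply_univ _).le
      _ = volume (cube d) * volume (Set.Ioc (0:ℝ) 1) := setLIntegral_const _ _
      _ < ∞ := ENNReal.mul_lt_top hcube (by simp [Real.volume_Ioc])
  have piece2 : ∫⁻ t in Set.Ioi (1:ℝ),
      volume.restrict (cube d) {a | t ≤ (‖a‖ ^ 4)⁻¹} < ∞ := by
    have hbound : ∀ t ∈ Set.Ioi (1:ℝ),
        volume.restrict (cube d) {a | t ≤ (‖a‖ ^ 4)⁻¹}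
          ≤ ENNReal.ofReal ((2 * (t⁻¹) ^ ((4:ℝ)⁻¹)) ^ d) := by
      intro t ht
      have ht0 : (0:ℝ) < t := lt_trans one_pos ht
      have hsub : {a : Fin d → ℝ | t ≤ (‖a‖ ^ 4)⁻¹}
          ⊆ Metric.closedBall 0 ((t⁻¹) ^ ((4:ℝ)⁻¹)) := by
        intro a ha
        simp only [Set.mem_setOf_eq] at ha
        rcases eq_or_lt_of_le (norm_nonneg a) with h0 | h0
        · simp only [Metric.mem_closedBall, dist_zero_right, ← h0]
          positivity
        · have hp : (0:ℝ) < ‖a‖ ^ 4 := by positivity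
          have h1 : ‖a‖ ^ 4 ≤ t⁻¹ := (le_inv_comm₀ ht0 hp).mp ha
          simp only [Metric.mem_closedBall, dist_zero_right]
          calc ‖a‖ = ((‖a‖ ^ (4:ℕ)) : ℝ) ^ ((4:ℝ)⁻¹) := by
                rw [← Real.rpow_natCast ‖a‖ 4, ← Real.rpow_mul (norm_nonneg a)]
                norm_num
            _ ≤ (t⁻¹) ^ ((4:ℝ)⁻¹) := Real.rpow_le_rpow hp.le h1 (by norm_num)
      calc volume.restrict (cube d) {a | t ≤ (‖a‖ ^ 4)⁻¹}
          ≤ volume {a : Fin d → ℝ | t ≤ (‖a‖ ^ 4)⁻¹} := Measure.restrict_apply_le _ _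
        _ ≤ volume (Metric.closedBall (0 : Fin d → ℝ) ((t⁻¹) ^ ((4:ℝ)⁻¹))) :=
            measure_mono hsub
        _ = ENNReal.ofReal ((2 * (t⁻¹) ^ ((4:ℝ)⁻¹)) ^ d) := by
            rw [Real.volume_pi_closedBall _ (by positivity)]
            simp
    have hint : IntegrableOn (fun t : ℝ => (2 * (t⁻¹) ^ ((4:ℝ)⁻¹)) ^ d)
        (Set.Ioi (1:ℝ)) := by
      have hexp : (-((4:ℝ)⁻¹ * d)) < -1 := by
        have : (5:ℝ) ≤ d := by exact_mod_cast hd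
        rw [neg_lt_neg_iff]
        nlinarith
      have base : IntegrableOn (fun t : ℝ => t ^ (-((4:ℝ)⁻¹ * d)))
          (Set.Ioi (1:ℝ)) := integrableOn_Ioi_rpow_of_lt hexp one_pos
      refine IntegrableOn.congr_fun (base.const_mul ((2:ℝ) ^ d)) (fun t ht => ?_)
        measurableSet_Ioi
      have ht0 : (0:ℝ) < t := lt_trans one_pos ht
      rw [mul_pow]
      congr 1
      rw [← Real.rpow_natCast ((t⁻¹) ^ ((4:ℝ)⁻¹)) d, ← Real.rpow_mul (by positivity),
        Real.inv_rpow ht0.le, ← Real.rpow_neg ht0.le]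
    calc ∫⁻ t in Set.Ioi (1:ℝ), volume.restrict (cube d) {a | t ≤ (‖a‖ ^ 4)⁻¹}
        ≤ ∫⁻ t in Set.Ioi (1:ℝ), ENNReal.ofReal ((2 * (t⁻¹) ^ ((4:ℝ)⁻¹)) ^ d) :=
          setLIntegral_mono' measurableSet_Ioi hbound
      _ < ∞ := hint.setLIntegral_lt_top
  exact ENNReal.add_lt_top.mpr ⟨piece1, piece2⟩

lemma integrableOn_inv_norm_pow4 (d : ℕ) (hd : 5 ≤ d) :
    IntegrableOn (fun φ : Fin d → ℝ => (‖φ‖ ^ 4)⁻¹) (cube d) := by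
  constructor
  · exact ((measurable_norm.pow_const 4).inv).aestronglyMeasurable
  · rw [hasFiniteIntegral_iff_ofReal (Eventually.of_forall fun φ => by positivity)]
    exact lintegral_inv_norm_pow4 d hd

lemma integrableOn_phi_inv_sq (d : ℕ) (hd : 5 ≤ d) :
    IntegrableOn (fun φ => ((Phi d φ) ^ 2)⁻¹) (cube d) := by
  refine Integrable.mono' ((integrableOn_inv_norm_pow4 d hd).const_mul ((π ^ 2 / 4) ^ 2))
    (((phi_cont d).pow 2).measurable.inv.aestronglyMeasurable) ?_
  filter_upwards [ae_restrict_mem (cube_measurable d)] with φ hφ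
  have hnn : 0 ≤ ((Phi d φ) ^ 2)⁻¹ := by positivity
  rw [Real.norm_eq_abs, abs_of_nonneg hnn]
  rcases eq_or_lt_of_le (norm_nonneg φ) with h0 | h0
  · have hφ0 : φ = 0 := by rwa [eq_comm, norm_eq_zero] at h0
    subst hφ0
    simp [Phi]
  · have hπ := Real.pi_pos
    have hlow : 4 / π ^ 2 * ‖φ‖ ^ 2 ≤ Phi d φ := phi_lower d hφ
    have hp : 0 < 4 / π ^ 2 * ‖φ‖ ^ 2 := by positivity
    have hsq : (4 / π ^ 2 * ‖φ‖ ^ 2) ^ 2 ≤ (Phi d φ) ^ 2 := by nlinarith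
    calc ((Phi d φ) ^ 2)⁻¹ ≤ ((4 / π ^ 2 * ‖φ‖ ^ 2) ^ 2)⁻¹ := by
          exact inv_anti₀ (by positivity) hsq
      _ = (π ^ 2 / 4) ^ 2 * (‖φ‖ ^ 4)⁻¹ := by
          field_simp

lemma integrableOn_const_cube (d : ℕ) (c : ℝ) :
    IntegrableOn (fun _ : Fin d → ℝ => c) (cube d) := by
  refine integrableOn_const ?_
  rw [volume_cube]
  exact (ENNReal.pow_lt_top ENNReal.ofReal_lt_top).ne

lemma integrableOn_phi_inv (d : ℕ) (hd : 5 ≤ d) :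
    IntegrableOn (fun φ => (Phi d φ)⁻¹) (cube d) := by
  refine Integrable.mono' ((integrableOn_const_cube d 1).add (integrableOn_phi_inv_sq d hd))
    ((phi_cont d).measurable.inv.aestronglyMeasurable) (Eventually.of_forall fun φ => ?_)
  have h0 := phi_nonneg d φ
  have hnn : 0 ≤ (Phi d φ)⁻¹ := by positivity
  rw [Real.norm_eq_abs, abs_of_nonneg hnn]
  show (Phi d φ)⁻¹ ≤ 1 + ((Phi d φ) ^ 2)⁻¹
  rcases eq_or_lt_of_le h0 with h | h
  · rw [← h]; norm_num
  rcases le_or_gt 1 (Phi d φ) with h1 | h1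
  · have : (Phi d φ)⁻¹ ≤ 1 := inv_le_one_of_one_le₀ h1
    have : (0:ℝ) ≤ ((Phi d φ) ^ 2)⁻¹ := by positivity
    linarith
  · have : (Phi d φ)⁻¹ ≤ ((Phi d φ) ^ 2)⁻¹ := by
      apply inv_anti₀ (by positivity)
      nlinarith
    linarith

lemma phi_pos_of_ne_zero (d : ℕ) {φ : Fin d → ℝ} (hφ : φ ∈ cube d) (h : φ ≠ 0) :
    0 < Phi d φ := by
  have hn : 0 < ‖φ‖ := norm_pos_iff.mpr h
  have := phi_lower d hφ
  have hπ := Real.pi_pos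
  have h1 : 0 < 4 / π ^ 2 * ‖φ‖ ^ 2 := by positivity
  linarith

lemma ae_ne_zero (d : ℕ) (hd : 1 ≤ d) : ∀ᵐ φ : Fin d → ℝ, φ ≠ 0 := by
  have h0 : volume ({0} : Set (Fin d → ℝ)) = 0 := by
    have : ({0} : Set (Fin d → ℝ)) = Set.univ.pi fun _ => ({0} : Set ℝ) := by
      ext x; simp [funext_iff]
    rw [this, volume_pi_pi]
    rw [Finset.prod_eq_zero (Finset.mem_univ (⟨0, Nat.lt_of_lt_of_le Nat.zero_lt_one hd⟩ : Fin d))]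
    exact Real.volume_singleton
  rw [ae_iff]
  convert h0 using 2
  ext φ
  simp

lemma vol_zero_singleton (d : ℕ) (hd : 1 ≤ d) : volume ({0} : Set (Fin d → ℝ)) = 0 := by
  have : ({0} : Set (Fin d → ℝ)) = Set.univ.pi fun _ => ({0} : Set ℝ) := by
    ext x; simp [funext_iff]
  rw [this, volume_pi_pi]
  rw [Finset.prod_eq_zero (Finset.mem_univ (⟨0, Nat.lt_of_lt_of_le Nat.zero_lt_one hd⟩ : Fin d))]
  exact Real.volume_singleton

lemma cd_pos (d : ℕ) (hd : 5 ≤ d) : 0 < cd d := by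
  have hπ := Real.pi_pos
  apply mul_pos (by positivity)
  rw [setIntegral_pos_iff_support_of_nonneg_ae
    (Eventually.of_forall fun φ => by positivity) (integrableOn_phi_inv_sq d hd)]
  have hsub : cube d \ {0} ⊆
      Function.support (fun φ => ((Phi d φ) ^ 2)⁻¹) ∩ cube d := by
    rintro φ ⟨h1, h2⟩
    refine ⟨?_, h1⟩
    have hp := phi_pos_of_ne_zero d h1 (by simpa using h2)
    simp only [Function.mem_support]
    positivity
  refine lt_of_lt_of_le ?_ (measure_mono hsub)
  rw [measure_diff_null (vol_zero_singleton d (le_trans (by norm_num) hd)), volume_cube]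
  exact ENNReal.pow_pos (ENNReal.ofReal_pos.mpr (by positivity)) d

/-- for `d ≥ 5`, the constant `c_d = (2π)^{-d} ∫ Φ(φ)^{-2} dφ` is finite and
positive, and `I(λ) = I(0) - c_d λ + o(λ)` as `λ → 0+`, i.e. `(I(0) - I(λ))/λ → c_d`. -/
theorem I_asymptotics_high_dim (d : ℕ) (hd : 5 ≤ d) :
    IntegrableOn (fun φ => ((Phi d φ) ^ 2)⁻¹) (cube d) ∧ 0 < cd d ∧
      Tendsto (fun lam : ℝ => (Ir d 0 - Ir d lam) / lam)
        (nhdsWithin 0 (Set.Ioi 0)) (nhds (cd d)) := by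
  have hd1 : 1 ≤ d := le_trans (by norm_num) hd
  refine ⟨integrableOn_phi_inv_sq d hd, cd_pos d hd, ?_⟩
  have hπ := Real.pi_pos
  have htend : Tendsto (fun lam : ℝ => ∫ φ in cube d, (Phi d φ * (lam + Phi d φ))⁻¹)
      (nhdsWithin 0 (Set.Ioi 0)) (nhds (∫ φ in cube d, ((Phi d φ) ^ 2)⁻¹)) := by
    apply tendsto_integral_filter_of_dominated_convergence (fun φ => ((Phi d φ) ^ 2)⁻¹)
    · exact Eventually.of_forall fun lam =>
        (((phi_cont d).mul (continuous_const.add (phi_cont d))).measurable.inv).aestronglyMeasurable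
    · refine eventually_nhdsWithin_of_forall (fun lam hlam => ?_)
      have hlam0 : (0:ℝ) < lam := hlam
      refine Eventually.of_forall fun φ => ?_
      have h0 := phi_nonneg d φ
      rcases eq_or_lt_of_le h0 with h | h
      · rw [← h]; simp
      · have hmul : (Phi d φ) ^ 2 ≤ Phi d φ * (lam + Phi d φ) := by nlinarith
        have hpos : 0 < Phi d φ * (lam + Phi d φ) := by nlinarith
        rw [Real.norm_eq_abs, abs_of_nonneg (by positivity)]
        exact inv_anti₀ (by positivity) hmul
    · exact integrableOn_phi_inv_sq d hd
    · filter_upwards [ae_restrict_of_ae (ae_ne_zero d hd1),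
        ae_restrict_mem (cube_measurable d)] with φ hne hφ
      have hp := phi_pos_of_ne_zero d hφ hne
      have h1 : Tendsto (fun lam : ℝ => Phi d φ * (lam + Phi d φ)) (nhds 0)
          (nhds (Phi d φ * (0 + Phi d φ))) :=
        (continuous_const.mul ((continuous_id.add continuous_const))).tendsto 0
      have h2 := (h1.inv₀ (by nlinarith)).mono_left (nhdsWithin_le_nhds (s := Set.Ioi 0))
      have : Phi d φ * (0 + Phi d φ) = (Phi d φ) ^ 2 := by ring
      rwa [this] at h2
  have heq : ∀ lam : ℝ, lam ∈ Set.Ioi (0:ℝ) →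
      ((2 * π) ^ d)⁻¹ * ∫ φ in cube d, (Phi d φ * (lam + Phi d φ))⁻¹
        = (Ir d 0 - Ir d lam) / lam := by
    intro lam hlam
    have hlam0 : (0:ℝ) < lam := hlam
    have hIlam : IntegrableOn (fun φ => (lam + Phi d φ)⁻¹) (cube d) := by
      refine Integrable.mono' (integrableOn_const_cube d lam⁻¹)
        ((continuous_const.add (phi_cont d)).measurable.inv.aestronglyMeasurable)
        (Eventually.of_forall fun φ => ?_)
      have h0 := phi_nonneg d φ
      rw [Real.norm_eq_abs, abs_of_nonneg (by positivity)]
      exact inv_anti₀ hlam0 (by linarith)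
    have key : ∫ φ in cube d, ((Phi d φ)⁻¹ - (lam + Phi d φ)⁻¹)
        = ∫ φ in cube d, lam * (Phi d φ * (lam + Phi d φ))⁻¹ := by
      apply integral_congr_ae
      filter_upwards [ae_restrict_of_ae (ae_ne_zero d hd1),
        ae_restrict_mem (cube_measurable d)] with φ hne hφ
      have hp := phi_pos_of_ne_zero d hφ hne
      have hq : (0:ℝ) < lam + Phi d φ := by linarith
      field_simp
      ring
    have hAB : (∫ φ in cube d, (Phi d φ)⁻¹) - (∫ φ in cube d, (lam + Phi d φ)⁻¹)
        = lam * ∫ φ in cube d, (Phi d φ * (lam + Phi d φ))⁻¹ := by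
      rw [← integral_sub (integrableOn_phi_inv d hd) hIlam, key, integral_const_mul]
    rw [Ir, Ir]
    simp only [zero_add]
    rw [← mul_sub, hAB]
    field_simp
  have hfinal := htend.const_mul (((2 * π) ^ d)⁻¹ : ℝ)
  exact Tendsto.congr' (eventually_nhdsWithin_of_forall heq) hfinal
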